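/- Assume h satisfies the stability property and the pair (h,h°) satisfies the Combinatorial Duality Property. Then the alternating sum of cube weights over all cubes of the rectangle R equals the total drop of h°: Σ_{(ℓ,I) a cube of R} (−1)^{|I|+1} · w((ℓ,I)) = h°(0) − h°(c). -/

import Mathlib

open Finset

/-- `cubeE I` is the lattice vector `E_I = ∑_{v ∈ I} E_v`, i.e. the characteristic
vector of the set `I` of coordinates. -/
def cubeE {s : ℕ} (I : Finset (Fin s)) : Fin s → ℤ := fun v => if v ∈ I then 1 else 0

section Aux
variable {s : ℕ}

lemma cubeE_nonneg (I : Finset (Fin s)) : (0 : Fin s → ℤ) ≤ cubeE I := by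
  intro v; simp only [cubeE, Pi.zero_apply]; split <;> norm_num

lemma cubeE_empty : cubeE (∅ : Finset (Fin s)) = 0 := by
  funext v; simp [cubeE]

lemma cubeE_mono {I J : Finset (Fin s)} (hIJ : I ⊆ J) : cubeE I ≤ cubeE J := by
  intro v; simp only [cubeE]
  by_cases hv : v ∈ I
  · simp [hv, hIJ hv]
  · simp only [hv, if_false]; split <;> norm_num

lemma cubeE_insert {v : Fin s} {J : Finset (Fin s)} (hv : v ∉ J) :
    cubeE (insert v J) = cubeE J + cubeE {v} := by
  funext x
  simp only [cubeE, Pi.add_apply, Finset.mem_insert, Finset.mem_singleton]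
  rcases eq_or_ne x v with rfl | hx
  · simp [hv]
  · simp [hx]

lemma cubeE_singleton_apply_ne {v u : Fin s} (h : u ≠ v) : cubeE {v} u = 0 := by
  simp [cubeE, h]

variable {c : Fin s → ℤ} {h h0 : (Fin s → ℤ) → ℤ}

/-- monotone chain along a subset -/
lemma mono_sub
    (h_mono : ∀ (ℓ : Fin s → ℤ) (v : Fin s), 0 ≤ ℓ → ℓ + cubeE {v} ≤ c →
      h ℓ ≤ h (ℓ + cubeE {v})) :
    ∀ (D J : Finset (Fin s)) (ℓ : Fin s → ℤ), 0 ≤ ℓ → Disjoint D J →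
      ℓ + cubeE (J ∪ D) ≤ c → h (ℓ + cubeE J) ≤ h (ℓ + cubeE (J ∪ D)) := by
  intro D
  induction D using Finset.induction_on with
  | empty => intro J ℓ _ _ _; simp
  | @insert u D hu IH =>
    intro J ℓ hℓ hdisj hbound
    have huJ : u ∉ J := (Finset.disjoint_left.1 hdisj) (Finset.mem_insert_self u D)
    have hDJ : Disjoint D J := Finset.disjoint_of_subset_left (Finset.subset_insert u D) hdisj
    have hsets : insert u J ∪ D = J ∪ insert u D := by
      ext x; simp only [Finset.mem_union, Finset.mem_insert]; tauto
    have hsub1 : insert u J ⊆ J ∪ insert u D := by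
      intro x hx; simp only [Finset.mem_insert] at hx
      simp only [Finset.mem_union, Finset.mem_insert]; tauto
    have hb1 : ℓ + cubeE (insert u J) ≤ c :=
      le_trans (add_le_add_right (cubeE_mono hsub1) ℓ) hbound
    have step : h (ℓ + cubeE J) ≤ h (ℓ + cubeE (insert u J)) := by
      have := h_mono (ℓ + cubeE J) u (le_trans hℓ (le_add_of_nonneg_right (cubeE_nonneg J)))
        (by rw [add_assoc, ← cubeE_insert huJ]; exact hb1)
      rwa [add_assoc, ← cubeE_insert huJ] at this
    have hDiJ : Disjoint D (insert u J) := by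
      rw [Finset.disjoint_insert_right]; exact ⟨hu, hDJ⟩
    have := IH (insert u J) ℓ hℓ hDiJ (by rw [hsets]; exact hbound)
    rw [hsets] at this
    exact le_trans step this

/-- antitone chain for h0 -/
lemma anti_sub
    (h0_anti : ∀ (ℓ : Fin s → ℤ) (v : Fin s), 0 ≤ ℓ → ℓ + cubeE {v} ≤ c →
      h0 (ℓ + cubeE {v}) ≤ h0 ℓ) :
    ∀ (D J : Finset (Fin s)) (ℓ : Fin s → ℤ), 0 ≤ ℓ → Disjoint D J →
      ℓ + cubeE (J ∪ D) ≤ c → h0 (ℓ + cubeE (J ∪ D)) ≤ h0 (ℓ + cubeE J) := by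
  intro D
  induction D using Finset.induction_on with
  | empty => intro J ℓ _ _ _; simp
  | @insert u D hu IH =>
    intro J ℓ hℓ hdisj hbound
    have huJ : u ∉ J := (Finset.disjoint_left.1 hdisj) (Finset.mem_insert_self u D)
    have hDJ : Disjoint D J := Finset.disjoint_of_subset_left (Finset.subset_insert u D) hdisj
    have hsets : insert u J ∪ D = J ∪ insert u D := by
      ext x; simp only [Finset.mem_union, Finset.mem_insert]; tauto
    have hsub1 : insert u J ⊆ J ∪ insert u D := by
      intro x hx; simp only [Finset.mem_insert] at hx
      simp only [Finset.mem_union, Finset.mem_insert]; tauto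
    have hb1 : ℓ + cubeE (insert u J) ≤ c :=
      le_trans (add_le_add_right (cubeE_mono hsub1) ℓ) hbound
    have step : h0 (ℓ + cubeE (insert u J)) ≤ h0 (ℓ + cubeE J) := by
      have := h0_anti (ℓ + cubeE J) u (le_trans hℓ (le_add_of_nonneg_right (cubeE_nonneg J)))
        (by rw [add_assoc, ← cubeE_insert huJ]; exact hb1)
      rwa [add_assoc, ← cubeE_insert huJ] at this
    have hDiJ : Disjoint D (insert u J) := by
      rw [Finset.disjoint_insert_right]; exact ⟨hu, hDJ⟩
    have := IH (insert u J) ℓ hℓ hDiJ (by rw [hsets]; exact hbound)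
    rw [hsets] at this
    exact le_trans this step

/-- equality transfer: equality of h across a sub-face propagates after adding v -/
lemma transfer
    (h_mono : ∀ (ℓ : Fin s → ℤ) (v : Fin s), 0 ≤ ℓ → ℓ + cubeE {v} ≤ c →
      h ℓ ≤ h (ℓ + cubeE {v}))
    (h_stab : ∀ (ℓ ℓbar : Fin s → ℤ) (v : Fin s), 0 ≤ ℓ → ℓ + cubeE {v} ≤ c →
      0 ≤ ℓbar → ℓbar v = 0 → ℓ + ℓbar + cubeE {v} ≤ c →
      h ℓ = h (ℓ + cubeE {v}) → h (ℓ + ℓbar) = h (ℓ + ℓbar + cubeE {v})) :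
    ∀ (D J : Finset (Fin s)) (v : Fin s) (ℓ : Fin s → ℤ), 0 ≤ ℓ →
      Disjoint D J → v ∉ J → v ∉ D →
      ℓ + cubeE (insert v (J ∪ D)) ≤ c →
      h (ℓ + cubeE J) = h (ℓ + cubeE (J ∪ D)) →
      h (ℓ + cubeE (insert v J)) = h (ℓ + cubeE (insert v (J ∪ D))) := by
  intro D
  induction D using Finset.induction_on with
  | empty => intro J v ℓ _ _ _ _ _ _; simp
  | @insert u D hu IH =>
    intro J v ℓ hℓ hdisj hvJ hvD hbound heq
    have huJ : u ∉ J := (Finset.disjoint_left.1 hdisj) (Finset.mem_insert_self u D)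
    have hDJ : Disjoint D J := Finset.disjoint_of_subset_left (Finset.subset_insert u D) hdisj
    have hvu : v ≠ u := fun hh => hvD (by simpa [hh] using Finset.mem_insert_self u D)
    have hvD' : v ∉ D := fun hh => hvD (Finset.mem_insert_of_mem hh)
    have hsets : insert u J ∪ D = J ∪ insert u D := by
      ext x; simp only [Finset.mem_union, Finset.mem_insert]; tauto
    have hℓJ : (0 : Fin s → ℤ) ≤ ℓ + cubeE J :=
      le_trans hℓ (le_add_of_nonneg_right (cubeE_nonneg J))
    -- bound helper
    have hble : ∀ {A : Finset (Fin s)}, A ⊆ insert v (J ∪ insert u D) → ℓ + cubeE A ≤ c :=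
      fun {A} hA => le_trans (add_le_add_right (cubeE_mono hA) ℓ) hbound
    have hsub_uJ : insert u J ⊆ insert v (J ∪ insert u D) := by
      intro x hx; simp only [Finset.mem_insert, Finset.mem_union] at *; tauto
    have hb_uJ : ℓ + cubeE J + cubeE {u} ≤ c := by
      rw [add_assoc, ← cubeE_insert huJ]; exact hble hsub_uJ
    -- Step A : h (ℓ + cubeE J) = h (ℓ + cubeE (insert u J))
    have hmono1 : h (ℓ + cubeE J) ≤ h (ℓ + cubeE (insert u J)) := by
      have := h_mono (ℓ + cubeE J) u hℓJ hb_uJ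
      rwa [add_assoc, ← cubeE_insert huJ] at this
    have hmono2 : h (ℓ + cubeE (insert u J)) ≤ h (ℓ + cubeE (J ∪ insert u D)) := by
      have hsub : insert u J ⊆ J ∪ insert u D := by
        intro x hx; simp only [Finset.mem_insert, Finset.mem_union] at *; tauto
      have := mono_sub h_mono ((J ∪ insert u D) \ insert u J) (insert u J) ℓ hℓ
        Finset.sdiff_disjoint (by rw [Finset.union_sdiff_of_subset hsub]
                                  exact hble (Finset.subset_insert _ _))
      rwa [Finset.union_sdiff_of_subset hsub] at this
    have hstepA : h (ℓ + cubeE J) = h (ℓ + cubeE (insert u J)) :=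
      le_antisymm hmono1 (heq ▸ hmono2)
    -- Step B : stability gives equality after adding v
    have hb_top : ℓ + cubeE J + cubeE {v} + cubeE {u} ≤ c := by
      have hvJ' : v ∉ J := hvJ
      have : cubeE J + cubeE {v} + cubeE {u} = cubeE (insert u (insert v J)) := by
        rw [cubeE_insert (show u ∉ insert v J by
              simp only [Finset.mem_insert]; push_neg
              exact ⟨fun hh => hvu hh.symm, huJ⟩),
            cubeE_insert hvJ']
      rw [add_assoc, add_assoc, ← add_assoc (cubeE J), this]
      refine hble ?_
      intro x hx; simp only [Finset.mem_insert, Finset.mem_union] at *; tauto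
    have hstepB : h (ℓ + cubeE J + cubeE {v}) = h (ℓ + cubeE J + cubeE {v} + cubeE {u}) := by
      refine h_stab (ℓ + cubeE J) (cubeE {v}) u hℓJ hb_uJ (cubeE_nonneg _)
        (cubeE_singleton_apply_ne hvu.symm) hb_top ?_
      rw [add_assoc, ← cubeE_insert huJ]; exact hstepA
    -- Step C : IH with J := insert u J
    have hIH : h (ℓ + cubeE (insert v (insert u J))) =
        h (ℓ + cubeE (insert v (insert u J ∪ D))) := by
      refine IH (insert u J) v ℓ hℓ ?_ ?_ hvD' ?_ ?_
      · rw [Finset.disjoint_insert_right]; exact ⟨hu, hDJ⟩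
      · simp only [Finset.mem_insert]; push_neg; exact ⟨hvu, hvJ⟩
      · rw [hsets]; exact hbound
      · rw [hsets, ← hstepA]; exact heq
    -- Combine
    have e1 : h (ℓ + cubeE (insert v J)) = h (ℓ + cubeE (insert v (insert u J))) := by
      have h1 : ℓ + cubeE (insert v J) = ℓ + cubeE J + cubeE {v} := by
        rw [cubeE_insert hvJ, add_assoc]
      have h2 : ℓ + cubeE (insert v (insert u J)) = ℓ + cubeE J + cubeE {v} + cubeE {u} := by
        rw [Finset.insert_comm, cubeE_insert (show u ∉ insert v J by
              simp only [Finset.mem_insert]; push_neg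
              exact ⟨fun hh => hvu hh.symm, huJ⟩),
            cubeE_insert hvJ]
        funext x; simp [add_assoc]
      rw [h1, h2]; exact hstepB
    rw [e1, hIH, hsets]

/-- the corner where the max is attained exists -/
lemma exists_corner
    (h_mono : ∀ (ℓ : Fin s → ℤ) (v : Fin s), 0 ≤ ℓ → ℓ + cubeE {v} ≤ c →
      h ℓ ≤ h (ℓ + cubeE {v}))
    (h_stab : ∀ (ℓ ℓbar : Fin s → ℤ) (v : Fin s), 0 ≤ ℓ → ℓ + cubeE {v} ≤ c →
      0 ≤ ℓbar → ℓbar v = 0 → ℓ + ℓbar + cubeE {v} ≤ c →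
      h ℓ = h (ℓ + cubeE {v}) → h (ℓ + ℓbar) = h (ℓ + ℓbar + cubeE {v}))
    (h_cdp : ∀ (ℓ : Fin s → ℤ) (v : Fin s), 0 ≤ ℓ → ℓ + cubeE {v} ≤ c →
      h (ℓ + cubeE {v}) - h ℓ = 0 ∨ h0 (ℓ + cubeE {v}) - h0 ℓ = 0) :
    ∀ (I : Finset (Fin s)) (ℓ : Fin s → ℤ), 0 ≤ ℓ → ℓ + cubeE I ≤ c →
      ∃ J, J ⊆ I ∧ h (ℓ + cubeE J) = h (ℓ + cubeE I) ∧ h0 (ℓ + cubeE J) = h0 ℓ := by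
  intro I
  induction I using Finset.induction_on with
  | empty => intro ℓ _ _; exact ⟨∅, Finset.Subset.refl _, rfl, by rw [cubeE_empty, add_zero]⟩
  | @insert v K hv IH =>
    intro ℓ hℓ hbound
    have hble : ∀ {A : Finset (Fin s)}, A ⊆ insert v K → ℓ + cubeE A ≤ c :=
      fun {A} hA => le_trans (add_le_add_right (cubeE_mono hA) ℓ) hbound
    obtain ⟨J, hJK, hJh, hJh0⟩ := IH ℓ hℓ (hble (Finset.subset_insert v K))
    have hJI : J ⊆ insert v K := hJK.trans (Finset.subset_insert v K)
    have hvJ : v ∉ J := fun hh => hv (hJK hh)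
    have hℓJ : (0 : Fin s → ℤ) ≤ ℓ + cubeE J :=
      le_trans hℓ (le_add_of_nonneg_right (cubeE_nonneg J))
    have hbvJ : ℓ + cubeE J + cubeE {v} ≤ c := by
      rw [add_assoc, ← cubeE_insert hvJ]
      exact hble (Finset.insert_subset_insert v hJK)
    have hKsplit : cubeE J + cubeE (K \ J) = cubeE K := by
      funext x
      simp only [cubeE, Pi.add_apply, Finset.mem_sdiff]
      by_cases hx : x ∈ K
      · by_cases hxJ : x ∈ J
        · simp [hx, hxJ]
        · simp [hx, hxJ]
      · have hxJ : x ∉ J := fun hh => hx (hJK hh)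
        simp [hx, hxJ]
    have e3 : ℓ + cubeE J + cubeE (K \ J) = ℓ + cubeE K := by rw [add_assoc, hKsplit]
    have e4 : ℓ + cubeE K + cubeE {v} = ℓ + cubeE (insert v K) := by
      rw [cubeE_insert hv, ← add_assoc]
    by_cases hcase : h (ℓ + cubeE K) = h (ℓ + cubeE (insert v K))
    · exact ⟨J, hJI, hJh.trans hcase, hJh0⟩
    · -- h strictly increases along v at ℓ + cubeE J
      have hne : h (ℓ + cubeE J) ≠ h (ℓ + cubeE J + cubeE {v}) := by
        intro heq
        apply hcase
        have hvKJ : (cubeE (K \ J)) v = 0 := by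
          simp [cubeE, Finset.mem_sdiff, hv]
        have := h_stab (ℓ + cubeE J) (cubeE (K \ J)) v hℓJ hbvJ (cubeE_nonneg _) hvKJ
          (by rw [e3, e4]; exact hbound) heq
        rw [e3, e4] at this
        exact this
      rcases h_cdp (ℓ + cubeE J) v hℓJ hbvJ with hd | hd
      · exact absurd (sub_eq_zero.1 hd).symm hne
      · have h0eq : h0 (ℓ + cubeE J + cubeE {v}) = h0 (ℓ + cubeE J) := sub_eq_zero.1 hd
        have hvKJ' : v ∉ K \ J := fun hh => hv (Finset.mem_sdiff.1 hh).1
        have htr := transfer h_mono h_stab (K \ J) J v ℓ hℓ Finset.sdiff_disjoint hvJ hvKJ'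
          (by rw [Finset.union_sdiff_of_subset hJK]; exact hbound)
          (by rw [Finset.union_sdiff_of_subset hJK]; exact hJh)
        rw [Finset.union_sdiff_of_subset hJK] at htr
        refine ⟨insert v J, Finset.insert_subset_insert v hJK, htr, ?_⟩
        rw [cubeE_insert hvJ, ← add_assoc, h0eq, hJh0]

/-- The weight of a cube equals `h` at the top corner plus `h0` at the bottom corner. -/
lemma sup'_eq
    (h_mono : ∀ (ℓ : Fin s → ℤ) (v : Fin s), 0 ≤ ℓ → ℓ + cubeE {v} ≤ c →
      h ℓ ≤ h (ℓ + cubeE {v}))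
    (h0_anti : ∀ (ℓ : Fin s → ℤ) (v : Fin s), 0 ≤ ℓ → ℓ + cubeE {v} ≤ c →
      h0 (ℓ + cubeE {v}) ≤ h0 ℓ)
    (h_stab : ∀ (ℓ ℓbar : Fin s → ℤ) (v : Fin s), 0 ≤ ℓ → ℓ + cubeE {v} ≤ c →
      0 ≤ ℓbar → ℓbar v = 0 → ℓ + ℓbar + cubeE {v} ≤ c →
      h ℓ = h (ℓ + cubeE {v}) → h (ℓ + ℓbar) = h (ℓ + ℓbar + cubeE {v}))
    (h_cdp : ∀ (ℓ : Fin s → ℤ) (v : Fin s), 0 ≤ ℓ → ℓ + cubeE {v} ≤ c →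
      h (ℓ + cubeE {v}) - h ℓ = 0 ∨ h0 (ℓ + cubeE {v}) - h0 ℓ = 0)
    (I : Finset (Fin s)) (ℓ : Fin s → ℤ) (hℓ : 0 ≤ ℓ) (hb : ℓ + cubeE I ≤ c) :
    I.powerset.sup' (Finset.powerset_nonempty I)
      (fun I' => h (ℓ + cubeE I') + h0 (ℓ + cubeE I') - h0 0) =
    h (ℓ + cubeE I) + h0 ℓ - h0 0 := by
  apply le_antisymm
  · refine Finset.sup'_le _ _ (fun I' hI' => ?_)
    have hsub : I' ⊆ I := Finset.mem_powerset.1 hI'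
    have h1 : h (ℓ + cubeE I') ≤ h (ℓ + cubeE I) := by
      have := mono_sub h_mono (I \ I') I' ℓ hℓ Finset.sdiff_disjoint
        (by rw [Finset.union_sdiff_of_subset hsub]; exact hb)
      rwa [Finset.union_sdiff_of_subset hsub] at this
    have h2 : h0 (ℓ + cubeE I') ≤ h0 ℓ := by
      have := anti_sub h0_anti I' ∅ ℓ hℓ (Finset.disjoint_empty_right I')
        (by rw [Finset.empty_union]
            exact le_trans (add_le_add_right (cubeE_mono hsub) ℓ) hb)
      rwa [Finset.empty_union, cubeE_empty, add_zero] at this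
    linarith
  · obtain ⟨J, hJ, e1, e2⟩ := exists_corner h_mono h_stab h_cdp I ℓ hℓ hb
    have := Finset.le_sup' (fun I' => h (ℓ + cubeE I') + h0 (ℓ + cubeE I') - h0 0)
      (Finset.mem_powerset.2 hJ)
    simp only [e1, e2] at this
    exact this

end Aux

open scoped Classical in
/-- if `h` satisfies the stability property and `(h, h°)` satisfies the
Combinatorial Duality Property, then
`Σ_{(ℓ,I) a cube of R} (−1)^{|I|+1} · w((ℓ,I)) = h°(0) − h°(c)`. -/
theorem statement0 {s : ℕ} (hs : 1 ≤ s) (c : Fin s → ℤ)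
    (hc : cubeE (Finset.univ : Finset (Fin s)) ≤ c)
    (h h0 : (Fin s → ℤ) → ℤ)
    (h_zero : h 0 = 0)
    (h_mono : ∀ (ℓ : Fin s → ℤ) (v : Fin s), 0 ≤ ℓ → ℓ + cubeE {v} ≤ c →
      h ℓ ≤ h (ℓ + cubeE {v}))
    (h0_anti : ∀ (ℓ : Fin s → ℤ) (v : Fin s), 0 ≤ ℓ → ℓ + cubeE {v} ≤ c →
      h0 (ℓ + cubeE {v}) ≤ h0 ℓ)
    (h_stab : ∀ (ℓ ℓbar : Fin s → ℤ) (v : Fin s), 0 ≤ ℓ → ℓ + cubeE {v} ≤ c →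
      0 ≤ ℓbar → ℓbar v = 0 → ℓ + ℓbar + cubeE {v} ≤ c →
      h ℓ = h (ℓ + cubeE {v}) → h (ℓ + ℓbar) = h (ℓ + ℓbar + cubeE {v}))
    (h_cdp : ∀ (ℓ : Fin s → ℤ) (v : Fin s), 0 ≤ ℓ → ℓ + cubeE {v} ≤ c →
      h (ℓ + cubeE {v}) - h ℓ = 0 ∨ h0 (ℓ + cubeE {v}) - h0 ℓ = 0) :
    ∑ ℓ ∈ Finset.Icc (0 : Fin s → ℤ) c,
      ∑ I ∈ (Finset.univ : Finset (Fin s)).powerset.filter (fun I => ℓ + cubeE I ≤ c),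
        (-1 : ℤ) ^ (I.card + 1) *
          I.powerset.sup' (Finset.powerset_nonempty I)
            (fun I' => h (ℓ + cubeE I') + h0 (ℓ + cubeE I') - h0 0)
      = h0 0 - h0 c := by
  have hc0 : (0 : Fin s → ℤ) ≤ c := le_trans (cubeE_nonneg _) hc
  -- Step 1: evaluate each sup'
  have step1 : ∀ ℓ ∈ Finset.Icc (0 : Fin s → ℤ) c,
      ∑ I ∈ (Finset.univ : Finset (Fin s)).powerset.filter (fun I => ℓ + cubeE I ≤ c),
        (-1 : ℤ) ^ (I.card + 1) *
          I.powerset.sup' (Finset.powerset_nonempty I)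
            (fun I' => h (ℓ + cubeE I') + h0 (ℓ + cubeE I') - h0 0)
      = (∑ I ∈ (Finset.univ : Finset (Fin s)).powerset.filter (fun I => ℓ + cubeE I ≤ c),
          (-1 : ℤ) ^ (I.card + 1) * h (ℓ + cubeE I))
        + (∑ I ∈ (Finset.univ : Finset (Fin s)).powerset.filter (fun I => ℓ + cubeE I ≤ c),
            (-1 : ℤ) ^ (I.card + 1)) * (h0 ℓ - h0 0) := by
    intro ℓ hℓ
    rw [Finset.sum_mul, ← Finset.sum_add_distrib]
    refine Finset.sum_congr rfl (fun I hI => ?_)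
    rw [sup'_eq h_mono h0_anti h_stab h_cdp I ℓ (Finset.mem_Icc.1 hℓ).1
      (Finset.mem_filter.1 hI).2]
    ring
  rw [Finset.sum_congr rfl step1, Finset.sum_add_distrib]
  -- Key A : the h-part vanishes
  have KeyA : ∑ ℓ ∈ Finset.Icc (0 : Fin s → ℤ) c,
      ∑ I ∈ (Finset.univ : Finset (Fin s)).powerset.filter (fun I => ℓ + cubeE I ≤ c),
        (-1 : ℤ) ^ (I.card + 1) * h (ℓ + cubeE I) = 0 := by
    rw [Finset.sum_sigma' (Finset.Icc (0 : Fin s → ℤ) c)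
      (fun ℓ => (Finset.univ : Finset (Fin s)).powerset.filter (fun I => ℓ + cubeE I ≤ c))
      (fun ℓ I => (-1 : ℤ) ^ (I.card + 1) * h (ℓ + cubeE I))]
    have e := Finset.sum_nbij'
      (s := (Finset.Icc (0 : Fin s → ℤ) c).sigma
        (fun ℓ => (Finset.univ : Finset (Fin s)).powerset.filter (fun I => ℓ + cubeE I ≤ c)))
      (t := (Finset.Icc (0 : Fin s → ℤ) c).sigma
        (fun m => (Finset.univ : Finset (Fin s)).powerset.filter (fun I => cubeE I ≤ m)))
      (f := fun p => (-1 : ℤ) ^ (p.2.card + 1) * h (p.1 + cubeE p.2))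
      (g := fun p => (-1 : ℤ) ^ (p.2.card + 1) * h p.1)
      (i := fun p => ⟨p.1 + cubeE p.2, p.2⟩)
      (j := fun p => ⟨p.1 - cubeE p.2, p.2⟩)
      (fun p hp => by
        obtain ⟨h1, h2⟩ := Finset.mem_sigma.1 hp
        obtain ⟨hp0, _⟩ := Finset.mem_Icc.1 h1
        obtain ⟨_, hpc⟩ := Finset.mem_filter.1 h2
        refine Finset.mem_sigma.2 ⟨Finset.mem_Icc.2
          ⟨add_nonneg hp0 (cubeE_nonneg _), hpc⟩, Finset.mem_filter.2
          ⟨Finset.mem_powerset.2 (Finset.subset_univ _), le_add_of_nonneg_left hp0⟩⟩)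
      (fun p hp => by
        obtain ⟨h1, h2⟩ := Finset.mem_sigma.1 hp
        obtain ⟨hp0, hpc⟩ := Finset.mem_Icc.1 h1
        obtain ⟨_, hpI⟩ := Finset.mem_filter.1 h2
        refine Finset.mem_sigma.2 ⟨Finset.mem_Icc.2
          ⟨sub_nonneg.2 hpI, le_trans (sub_le_self _ (cubeE_nonneg _)) hpc⟩,
          Finset.mem_filter.2 ⟨Finset.mem_powerset.2 (Finset.subset_univ _), by
            rw [sub_add_cancel]; exact hpc⟩⟩)
      (fun p _ => by simp)
      (fun p _ => by simp)
      (fun p _ => rfl)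
    rw [e, ← Finset.sum_sigma' (Finset.Icc (0 : Fin s → ℤ) c)
      (fun m => (Finset.univ : Finset (Fin s)).powerset.filter (fun I => cubeE I ≤ m))
      (fun m I => (-1 : ℤ) ^ (I.card + 1) * h m)]
    refine Finset.sum_eq_zero (fun m hm => ?_)
    obtain ⟨hm0, hmc⟩ := Finset.mem_Icc.1 hm
    have hfilt2 : (Finset.univ : Finset (Fin s)).powerset.filter (fun I => cubeE I ≤ m)
        = (Finset.univ.filter (fun v => 1 ≤ m v)).powerset := by
      ext I
      constructor
      · intro hI
        rw [Finset.mem_powerset]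
        intro v hv
        have h1 := (Pi.le_def.mp (Finset.mem_filter.1 hI).2) v
        simp only [cubeE, hv, if_true] at h1
        simp only [Finset.mem_filter, Finset.mem_univ, true_and]
        exact h1
      · intro hI
        rw [Finset.mem_powerset] at hI
        refine Finset.mem_filter.2 ⟨Finset.mem_powerset.2 (Finset.subset_univ I), ?_⟩
        rw [Pi.le_def]
        intro v
        by_cases hv : v ∈ I
        · have h2 := hI hv
          simp only [Finset.mem_filter, Finset.mem_univ, true_and] at h2
          simpa [cubeE, hv] using h2
        · have h2 := (Pi.le_def.mp hm0) v
          simpa [cubeE, hv] using h2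
    rw [hfilt2, ← Finset.sum_mul]
    have hsum : ∑ I ∈ (Finset.univ.filter (fun v => 1 ≤ m v)).powerset,
        (-1 : ℤ) ^ (I.card + 1)
        = -(if (Finset.univ.filter (fun v => 1 ≤ m v)) = ∅ then 1 else 0) := by
      simp only [pow_succ]
      rw [← Finset.sum_mul, Finset.sum_powerset_neg_one_pow_card]
      split <;> ring
    rw [hsum]
    by_cases hP : (Finset.univ.filter (fun v => 1 ≤ m v)) = ∅
    · have hm_eq : m = 0 := by
        funext v
        have hnm : v ∉ Finset.univ.filter (fun v => 1 ≤ m v) := by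
          rw [hP]
          exact Finset.notMem_empty v
        simp only [Finset.mem_filter, Finset.mem_univ, true_and, not_le] at hnm
        have h2 := (Pi.le_def.mp hm0) v
        rw [Pi.zero_apply]
        simp only [Pi.zero_apply] at h2
        omega
      rw [if_pos hP, hm_eq, h_zero]
      ring
    · rw [if_neg hP]
      ring
  -- Key B : the h0-part
  have KeyB : ∑ ℓ ∈ Finset.Icc (0 : Fin s → ℤ) c,
      (∑ I ∈ (Finset.univ : Finset (Fin s)).powerset.filter (fun I => ℓ + cubeE I ≤ c),
        (-1 : ℤ) ^ (I.card + 1)) * (h0 ℓ - h0 0) = h0 0 - h0 c := by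
    have hterm : ∀ ℓ ∈ Finset.Icc (0 : Fin s → ℤ) c,
        (∑ I ∈ (Finset.univ : Finset (Fin s)).powerset.filter (fun I => ℓ + cubeE I ≤ c),
          (-1 : ℤ) ^ (I.card + 1)) * (h0 ℓ - h0 0)
        = if ℓ = c then h0 0 - h0 c else 0 := by
      intro ℓ hℓ
      obtain ⟨hℓ0, hℓc⟩ := Finset.mem_Icc.1 hℓ
      have hfilt : (Finset.univ : Finset (Fin s)).powerset.filter (fun I => ℓ + cubeE I ≤ c)
          = (Finset.univ.filter (fun v => ℓ v + 1 ≤ c v)).powerset := by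
        ext I
        constructor
        · intro hI
          rw [Finset.mem_powerset]
          intro v hv
          have h1 := (Pi.le_def.mp (Finset.mem_filter.1 hI).2) v
          simp only [Pi.add_apply, cubeE, hv, if_true] at h1
          simp only [Finset.mem_filter, Finset.mem_univ, true_and]
          linarith
        · intro hI
          rw [Finset.mem_powerset] at hI
          refine Finset.mem_filter.2 ⟨Finset.mem_powerset.2 (Finset.subset_univ I), ?_⟩
          rw [Pi.le_def]
          intro v
          by_cases hv : v ∈ I
          · have h2 := hI hv
            simp only [Finset.mem_filter, Finset.mem_univ, true_and] at h2
            simp only [Pi.add_apply, cubeE, hv, if_true]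
            linarith
          · have h2 := (Pi.le_def.mp hℓc) v
            simpa [Pi.add_apply, cubeE, hv] using h2
      rw [hfilt]
      have hsum : ∑ I ∈ (Finset.univ.filter (fun v => ℓ v + 1 ≤ c v)).powerset,
          (-1 : ℤ) ^ (I.card + 1)
          = -(if (Finset.univ.filter (fun v => ℓ v + 1 ≤ c v)) = ∅ then 1 else 0) := by
        simp only [pow_succ]
        rw [← Finset.sum_mul, Finset.sum_powerset_neg_one_pow_card]
        split <;> ring
      rw [hsum]
      by_cases hcase : ℓ = c
      · have hP : (Finset.univ.filter (fun v => ℓ v + 1 ≤ c v)) = ∅ := by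
          subst hcase
          refine Finset.filter_eq_empty_iff.2 (fun v _ => by omega)
        rw [if_pos hP, if_pos hcase, hcase]
        ring
      · have hP : (Finset.univ.filter (fun v => ℓ v + 1 ≤ c v)) ≠ ∅ := by
          intro hP
          apply hcase
          funext v
          have hnm : v ∉ Finset.univ.filter (fun v => ℓ v + 1 ≤ c v) := by
            rw [hP]
            exact Finset.notMem_empty v
          simp only [Finset.mem_filter, Finset.mem_univ, true_and, not_le] at hnm
          have h2 := (Pi.le_def.mp hℓc) v
          omega
        rw [if_neg hP, if_neg hcase]
        ring
    rw [Finset.sum_congr rfl hterm, Finset.sum_ite_eq' (Finset.Icc (0 : Fin s → ℤ) c) c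
      (fun _ => h0 0 - h0 c)]
    rw [if_pos (Finset.mem_Icc.2 ⟨hc0, le_refl c⟩)]
  rw [KeyA, KeyB, zero_add]
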